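/- For every integer n ≥ 3, the number of distinct values taken by the permanent on the set Δ_n^3 of circulants in Λ_n^3 is at most ⌊(n² + 3)/12⌋. -/

import Mathlib

open Matrix
open Fin.NatCast

/-- `P_n`: the permutation matrix of the cycle `(1 2 … n)`, with 1's exactly in positions
`(1,2), (2,3), …, (n−1,n), (n,1)`. -/
def cycMatrix (n : ℕ) : Matrix (Fin n) (Fin n) ℤ := (finRotate n).permMatrix ℤ

lemma permMatrix_pow (n : ℕ) (σ : Equiv.Perm (Fin n)) (k : ℕ) :
    ((σ ^ k).permMatrix ℤ) = (σ.permMatrix ℤ) ^ k := by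
  induction k with
  | zero => simp [Equiv.Perm.permMatrix, Equiv.Perm.one_def, Equiv.toPEquiv_refl,
      PEquiv.toMatrix_refl]
  | succ k ih =>
    rw [pow_succ, Equiv.Perm.mul_def, Equiv.Perm.permMatrix, Equiv.toPEquiv_trans,
      PEquiv.toMatrix_trans, ← Equiv.Perm.permMatrix, ← Equiv.Perm.permMatrix, ih, pow_succ']

lemma finRotate_pow_apply (m k : ℕ) (i : Fin (m+1)) :
    ((finRotate (m+1)) ^ k) i = i + (k : Fin (m+1)) := by
  induction k with
  | zero => simp
  | succ k ih =>
    rw [pow_succ', Equiv.Perm.mul_apply, ih, finRotate_succ_apply]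
    push_cast
    abel

lemma finRotate_pow_n (n : ℕ) : (finRotate n) ^ n = 1 := by
  rcases n with _ | m
  · rfl
  · ext i
    rw [finRotate_pow_apply]
    simp [Fin.natCast_self]

lemma cycMatrix_pow_n (n : ℕ) : cycMatrix n ^ n = 1 := by
  rw [cycMatrix, ← permMatrix_pow, finRotate_pow_n]
  simp [Equiv.Perm.permMatrix, Equiv.Perm.one_def, Equiv.toPEquiv_refl, PEquiv.toMatrix_refl]

lemma permanent_cycPow_mul {n : ℕ} (k : ℕ) (M : Matrix (Fin n) (Fin n) ℤ) :
    (cycMatrix n ^ k * M).permanent = M.permanent := by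
  rw [cycMatrix, ← permMatrix_pow, Equiv.Perm.permMatrix, PEquiv.toMatrix_toPEquiv_mul,
    permanent_permute_cols]

lemma cycMatrix_pow_transpose {n : ℕ} (k : ℕ) (hk : k ≤ n) :
    (cycMatrix n ^ k)ᵀ = cycMatrix n ^ (n - k) := by
  have hinv : ((finRotate n) ^ k)⁻¹ = (finRotate n) ^ (n - k) := by
    apply inv_eq_of_mul_eq_one_right
    rw [← pow_add]
    have : k + (n - k) = n := by omega
    rw [this, finRotate_pow_n]
  rw [cycMatrix, ← permMatrix_pow, ← permMatrix_pow]
  show ((finRotate n ^ k).toPEquiv.toMatrix)ᵀ = (finRotate n ^ (n-k)).toPEquiv.toMatrix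
  rw [← PEquiv.toMatrix_symm, ← Equiv.toPEquiv_symm, ← Equiv.Perm.inv_def, hinv]

/-- permanent of the circulant with gap vector `(a, b, n-a-b)`. -/
def permVal (n a b : ℕ) : ℤ := (1 + cycMatrix n ^ a + cycMatrix n ^ (a+b)).permanent

lemma permVal_rot {n a b c : ℕ} (h : a + b + c = n) : permVal n a b = permVal n b c := by
  have e1 : cycMatrix n ^ (b+c) * cycMatrix n ^ a = 1 := by
    rw [← pow_add, show b + c + a = n by omega, cycMatrix_pow_n]
  have e2 : cycMatrix n ^ (b+c) * cycMatrix n ^ (a+b) = cycMatrix n ^ b := by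
    rw [← pow_add, show b + c + (a+b) = n + b by omega, pow_add, cycMatrix_pow_n, one_mul]
  have key : cycMatrix n ^ (b+c) * (1 + cycMatrix n ^ a + cycMatrix n ^ (a+b))
      = 1 + cycMatrix n ^ b + cycMatrix n ^ (b+c) := by
    rw [mul_add, mul_add, mul_one, e1, e2]
    abel
  have := permanent_cycPow_mul (b+c) (1 + cycMatrix n ^ a + cycMatrix n ^ (a+b))
  rw [key] at this
  exact this.symm

lemma permVal_ref {n a b c : ℕ} (h : a + b + c = n) : permVal n a b = permVal n c b := by
  have := permanent_transpose (1 + cycMatrix n ^ a + cycMatrix n ^ (a+b))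
  rw [transpose_add, transpose_add, transpose_one,
    cycMatrix_pow_transpose a (by omega), cycMatrix_pow_transpose (a+b) (by omega),
    show n - a = c + b by omega, show n - (a+b) = c by omega] at this
  calc permVal n a b = (1 + cycMatrix n ^ (c+b) + cycMatrix n ^ c).permanent := this.symm
    _ = permVal n c b := by unfold permVal; rw [add_right_comm]

lemma permVal_sorted {n a b c : ℕ} (ha : 1 ≤ a) (hb : 1 ≤ b) (hc : 1 ≤ c) (h : a+b+c = n) :
    ∃ p q, 1 ≤ p ∧ p ≤ q ∧ p + 2*q ≤ n ∧ permVal n a b = permVal n p q := by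
  have pbc : permVal n a b = permVal n b c := permVal_rot h
  have pca : permVal n a b = permVal n c a := pbc.trans (permVal_rot (by omega))
  have pcb : permVal n a b = permVal n c b := permVal_ref h
  have pac : permVal n a b = permVal n a c := pbc.trans (permVal_ref (by omega))
  have pba : permVal n a b = permVal n b a := pca.trans (permVal_ref (by omega))
  rcases le_total a b with h1 | h1 <;> rcases le_total b c with h2 | h2 <;>
    rcases le_total a c with h3 | h3
  · exact ⟨a, b, ha, h1, by omega, rfl⟩
  · exact ⟨a, b, ha, h1, by omega, rfl⟩
  · exact ⟨a, c, ha, h3, by omega, pac⟩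
  · exact ⟨c, a, hc, h3, by omega, pca⟩
  · exact ⟨b, a, hb, h1, by omega, pba⟩
  · exact ⟨b, c, hb, h2, by omega, pbc⟩
  · exact ⟨c, b, hc, h2, by omega, pcb⟩
  · exact ⟨c, b, hc, h2, by omega, pcb⟩


lemma arith_step (k : ℕ) : ((k+1)^2+3)/12 = (k^2+3)/12 + ((k/2) + 1 - (k+3)/3) := by
  obtain ⟨q, r, hr, rfl⟩ : ∃ q r, r < 6 ∧ k = 6*q + r :=
    ⟨k/6, k%6, Nat.mod_lt _ (by norm_num), by omega⟩
  obtain ⟨X, hX⟩ : ∃ X, 3*(q*q) + q*r = X := ⟨_, rfl⟩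
  have h1 : (6*q+r)^2 = 12*X + r^2 := by rw [← hX]; ring
  have h2 : (6*q+r+1)^2 = 12*X + 12*q + (r^2+2*r+1) := by rw [← hX]; ring
  rw [h1, h2]
  interval_cases r <;> omega

lemma slice_card (m : ℕ) (hm : 1 ≤ m) :
    ((Finset.range (m+1) ×ˢ Finset.range (m+1)).filter
      (fun p => 1 ≤ p.1 ∧ p.1 ≤ p.2 ∧ p.1 + 2*p.2 = m)).card
      = (m-1)/2 + 1 - (m+2)/3 := by
  rw [← Nat.card_Icc ((m+2)/3) ((m-1)/2)]
  apply Finset.card_bij (fun p _ => p.2)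
  · intro p hp
    simp only [Finset.mem_filter, Finset.mem_product, Finset.mem_range] at hp
    simp only [Finset.mem_Icc]
    omega
  · intro p hp q hq hpq
    simp only [Finset.mem_filter, Finset.mem_product, Finset.mem_range] at hp hq
    have : p.1 = q.1 := by omega
    exact Prod.ext this hpq
  · intro q hq
    simp only [Finset.mem_Icc] at hq
    refine ⟨(m - 2*q, q), ?_, rfl⟩
    simp only [Finset.mem_filter, Finset.mem_product, Finset.mem_range]
    omega

lemma Tset_card_le (n : ℕ) :
    ((Finset.range (n+1) ×ˢ Finset.range (n+1)).filter
      (fun p => 1 ≤ p.1 ∧ p.1 ≤ p.2 ∧ p.1 + 2*p.2 ≤ n)).card ≤ (n^2+3)/12 := by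
  induction n with
  | zero =>
    refine le_trans (le_of_eq (Finset.card_eq_zero.mpr ?_)) (by norm_num)
    apply Finset.filter_eq_empty_iff.mpr
    intro p _
    omega
  | succ n ih =>
    have hsplit : ((Finset.range (n+2) ×ˢ Finset.range (n+2)).filter
        (fun p => 1 ≤ p.1 ∧ p.1 ≤ p.2 ∧ p.1 + 2*p.2 ≤ n+1))
        = ((Finset.range (n+1) ×ˢ Finset.range (n+1)).filter
            (fun p => 1 ≤ p.1 ∧ p.1 ≤ p.2 ∧ p.1 + 2*p.2 ≤ n))
          ∪ ((Finset.range (n+2) ×ˢ Finset.range (n+2)).filter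
            (fun p => 1 ≤ p.1 ∧ p.1 ≤ p.2 ∧ p.1 + 2*p.2 = n+1)) := by
      ext p
      simp only [Finset.mem_union, Finset.mem_filter, Finset.mem_product, Finset.mem_range]
      omega
    have hdisj : Disjoint ((Finset.range (n+1) ×ˢ Finset.range (n+1)).filter
            (fun p : ℕ × ℕ => 1 ≤ p.1 ∧ p.1 ≤ p.2 ∧ p.1 + 2*p.2 ≤ n))
          ((Finset.range (n+2) ×ˢ Finset.range (n+2)).filter
            (fun p => 1 ≤ p.1 ∧ p.1 ≤ p.2 ∧ p.1 + 2*p.2 = n+1)) := by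
      rw [Finset.disjoint_left]
      intro p hp hq
      simp only [Finset.mem_filter, Finset.mem_product, Finset.mem_range] at hp hq
      omega
    rw [hsplit, Finset.card_union_of_disjoint hdisj, slice_card (n+1) (by omega)]
    have := arith_step n
    omega


theorem stmt_10 (n : ℕ) (hn : 3 ≤ n) :
    Set.ncard {x : ℤ | ∃ i j k : ℕ, i < j ∧ j < k ∧ k ≤ n - 1 ∧
        (cycMatrix n ^ i + cycMatrix n ^ j + cycMatrix n ^ k).permanent = x} ≤
      (n ^ 2 + 3) / 12 := by
  classical
  set T : Finset (ℕ × ℕ) := (Finset.range (n+1) ×ˢ Finset.range (n+1)).filter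
      (fun p => 1 ≤ p.1 ∧ p.1 ≤ p.2 ∧ p.1 + 2*p.2 ≤ n) with hT
  have hsub : {x : ℤ | ∃ i j k : ℕ, i < j ∧ j < k ∧ k ≤ n - 1 ∧
        (cycMatrix n ^ i + cycMatrix n ^ j + cycMatrix n ^ k).permanent = x}
      ⊆ ↑(T.image (fun p => permVal n p.1 p.2)) := by
    rintro x ⟨i, j, k, hij, hjk, hk, rfl⟩
    have hkn : k ≤ n - 1 := hk
    have ha : 1 ≤ j - i := by omega
    have hb : 1 ≤ k - j := by omega
    have hc : 1 ≤ n - k + i := by omega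
    have hsum : (j - i) + (k - j) + (n - k + i) = n := by omega
    have hx : (cycMatrix n ^ i + cycMatrix n ^ j + cycMatrix n ^ k).permanent
        = permVal n (j - i) (k - j) := by
      have key : cycMatrix n ^ i * (1 + cycMatrix n ^ (j - i) + cycMatrix n ^ ((j - i) + (k - j)))
          = cycMatrix n ^ i + cycMatrix n ^ j + cycMatrix n ^ k := by
        rw [mul_add, mul_add, mul_one, ← pow_add, ← pow_add,
          show i + (j - i) = j by omega, show i + ((j - i) + (k - j)) = k by omega]
      rw [← key, permanent_cycPow_mul]
      rfl
    obtain ⟨p, q, hp1, hpq, hpqn, hval⟩ := permVal_sorted ha hb hc hsum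
    refine Finset.mem_coe.mpr (Finset.mem_image.mpr ⟨(p, q), ?_, ?_⟩)
    · rw [hT]
      simp only [Finset.mem_filter, Finset.mem_product, Finset.mem_range]
      omega
    · rw [← hx.trans hval]
  calc Set.ncard {x : ℤ | ∃ i j k : ℕ, i < j ∧ j < k ∧ k ≤ n - 1 ∧
        (cycMatrix n ^ i + cycMatrix n ^ j + cycMatrix n ^ k).permanent = x}
      ≤ Set.ncard ↑(T.image (fun p => permVal n p.1 p.2)) :=
        Set.ncard_le_ncard hsub (Finset.finite_toSet _)
    _ = (T.image (fun p => permVal n p.1 p.2)).card := Set.ncard_coe_finset _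
    _ ≤ T.card := Finset.card_image_le
    _ ≤ (n ^ 2 + 3) / 12 := Tset_card_le n
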